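/- Let n ≥ 1 be an integer, R > 0, Ω = B_R(0) ⊂ ℝⁿ, b ∈ (1,2), s₀ ∈ (0,Rⁿ), M̃₀ > 0, and set r₀ := (s₀/4)^{1/n}. Let u₀ ∈ C⁰(Ω̄) be nonnegative and radially symmetric, written u₀ = u₀(ρ) with ρ = |x|, and assume ∫_{B_{r₀}(0)} u₀(x) dx ≥ M̃₀. Define U(s) := ∫₀^{s^{1/n}} ρ^{n−1} u₀(ρ) dρ for s ∈ [0,Rⁿ]. Then ∫₀^{s₀} s^{−b}(s₀−s) U(s) ds > (2^{b−3} M̃₀ / ω_n) · s₀^{2−b}, where ω_n denotes the (n−1)-dimensional surface area of the unit sphere in ℝⁿ. -/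

import Mathlib

open MeasureTheory Real Set Filter Topology
open scoped ENNReal

noncomputable section

/-- Euclidean space ℝⁿ. -/
abbrev Euc (n : ℕ) := EuclideanSpace ℝ (Fin n)

/-- The domain Ω = B_R(0) ⊂ ℝⁿ. -/
def Omega (n : ℕ) (R : ℝ) : Set (Euc n) := Metric.ball 0 R

/-- A unit coordinate vector in ℝⁿ. -/
def e1 (n : ℕ) : Euc n := if h : 0 < n then EuclideanSpace.single (⟨0, h⟩ : Fin n) 1 else 0

/-- The (n−1)-dimensional surface area of the unit sphere in ℝⁿ, i.e. n · |B₁(0)|. -/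
def omegaN (n : ℕ) : ℝ := (n : ℝ) * (volume (Metric.ball (0 : Euc n) 1)).toReal

lemma norm_e1 (n : ℕ) (hn : 1 ≤ n) : ‖e1 n‖ = 1 := by
  rw [e1, dif_pos (by omega : 0 < n), EuclideanSpace.norm_single]
  simp

lemma norm_smul_e1 (n : ℕ) (hn : 1 ≤ n) (ρ : ℝ) (hρ : 0 ≤ ρ) : ‖ρ • e1 n‖ = ρ := by
  rw [norm_smul, norm_e1 n hn, mul_one, Real.norm_eq_abs, abs_of_nonneg hρ]

lemma polar (n : ℕ) (hn : 1 ≤ n) (R : ℝ) (hR : 0 < R) (u₀ : Euc n → ℝ)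
    (hrad : ∀ x ∈ closure (Omega n R), ∀ y ∈ closure (Omega n R), ‖x‖ = ‖y‖ → u₀ x = u₀ y)
    (r : ℝ) (hr0 : 0 ≤ r) (hrR : r ≤ R) :
    ∫ x in Metric.ball (0 : Euc n) r, u₀ x
      = omegaN n * ∫ ρ in (0:ℝ)..r, ρ ^ ((n:ℝ) - 1) * u₀ (ρ • e1 n) := by
  have hnt : Nontrivial (Euc n) := by
    refine Module.nontrivial_of_finrank_pos (R := ℝ) ?_
    rw [finrank_euclideanSpace, Fintype.card_fin]; omega
  have hclo : closure (Omega n R) = Metric.closedBall (0 : Euc n) R := by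
    rw [Omega, closure_ball 0 hR.ne']
  set f : ℝ → ℝ := Set.indicator (Iio r) (fun y => u₀ (y • e1 n)) with hf
  have key : ∀ x : Euc n, (Metric.ball (0 : Euc n) r).indicator u₀ x = f ‖x‖ := by
    intro x
    by_cases hx : ‖x‖ < r
    · rw [Set.indicator_of_mem (by simpa [mem_ball_zero_iff] using hx),
        hf, Set.indicator_of_mem (by simpa using hx)]
      refine hrad x ?_ (‖x‖ • e1 n) ?_ ?_
      · rw [hclo]; exact Metric.mem_closedBall.2 (by simpa using (hx.trans_le hrR).le)
      · rw [hclo]; simp [Metric.mem_closedBall,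
          norm_smul_e1 n hn _ (norm_nonneg x), (hx.trans_le hrR).le]
      · rw [norm_smul_e1 n hn _ (norm_nonneg x)]
    · rw [Set.indicator_of_notMem (by simpa [mem_ball_zero_iff] using hx),
        hf, Set.indicator_of_notMem (by simpa using hx)]
  have h1 : ∫ x in Metric.ball (0 : Euc n) r, u₀ x = ∫ x : Euc n, f ‖x‖ := by
    rw [← integral_indicator Metric.isOpen_ball.measurableSet]
    exact integral_congr_ae (Filter.Eventually.of_forall key)
  rw [h1, integral_fun_norm_addHaar volume f]
  have hdim : Module.finrank ℝ (Euc n) = n := by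
    rw [finrank_euclideanSpace, Fintype.card_fin]
  rw [hdim]
  have h2 : ∀ y : ℝ, y ^ (n - 1) • f y
      = Set.indicator (Iio r) (fun y => y ^ (n-1) * u₀ (y • e1 n)) y := by
    intro y
    by_cases hy : y ∈ Iio r
    · rw [hf, Set.indicator_of_mem hy, Set.indicator_of_mem hy, smul_eq_mul]
    · rw [hf, Set.indicator_of_notMem hy, Set.indicator_of_notMem hy, smul_zero]
  rw [integral_congr_ae (Filter.Eventually.of_forall fun y => h2 y),
    setIntegral_indicator measurableSet_Iio]
  have h3 : Ioi (0:ℝ) ∩ Iio r = Ioo 0 r := by ext y; simp [and_comm]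
  rw [h3]
  have h4 : (fun y : ℝ => y ^ ((n:ℝ) - 1) * u₀ (y • e1 n))
      = fun y : ℝ => y ^ (n - 1) * u₀ (y • e1 n) := by
    funext y
    rw [show ((n:ℝ) - 1) = ((n - 1 : ℕ) : ℝ) by push_cast [Nat.cast_sub hn]; ring,
      Real.rpow_natCast]
  rw [intervalIntegral.integral_of_le hr0, h4,
    ← MeasureTheory.integral_Ioc_eq_integral_Ioo]
  rw [omegaN, nsmul_eq_mul, smul_eq_mul, mul_assoc]
  rfl

set_option maxHeartbeats 2000000 in
/-- lower bound of the moment functional at the initial time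
(cf. [W-2018, (5.5)]). -/
theorem statement18 (n : ℕ) (hn : 1 ≤ n) (R : ℝ) (hR : 0 < R)
    (b s₀ M₀' : ℝ) (hb : b ∈ Set.Ioo (1:ℝ) 2) (hs₀ : s₀ ∈ Set.Ioo (0:ℝ) (R ^ n))
    (hM₀' : 0 < M₀')
    (u₀ : Euc n → ℝ) (hu₀c : ContinuousOn u₀ (closure (Omega n R)))
    (hu₀0 : ∀ x ∈ closure (Omega n R), 0 ≤ u₀ x)
    (hrad : ∀ x ∈ closure (Omega n R), ∀ y ∈ closure (Omega n R), ‖x‖ = ‖y‖ → u₀ x = u₀ y)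
    (hint : M₀' ≤ (∫ x in Metric.ball (0 : Euc n) ((s₀ / 4) ^ ((n:ℝ)⁻¹)), u₀ x)) :
    (2:ℝ) ^ (b - 3) * M₀' / omegaN n * s₀ ^ (2 - b)
      < ∫ s in (0:ℝ)..s₀, s ^ (-b) * (s₀ - s)
          * (∫ ρ in (0:ℝ)..(s ^ ((n:ℝ)⁻¹)), ρ ^ ((n:ℝ) - 1) * u₀ (ρ • e1 n)) := by
  obtain ⟨hb1, hb2⟩ := hb
  obtain ⟨hs0, hsR⟩ := hs₀
  have hn0 : (0:ℝ) < n := by exact_mod_cast hn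
  have hn1 : (1:ℝ) ≤ n := by exact_mod_cast hn
  have hclo : closure (Omega n R) = Metric.closedBall (0 : Euc n) R := by
    rw [Omega, closure_ball 0 hR.ne']
  -- the radial profile
  set h : ℝ → ℝ := fun ρ => ρ ^ ((n:ℝ) - 1) * u₀ (ρ • e1 n) with hh
  set U : ℝ → ℝ := fun s => ∫ ρ in (0:ℝ)..(s ^ ((n:ℝ)⁻¹)), h ρ with hU
  set g : ℝ → ℝ := fun s => s ^ (-b) * (s₀ - s) * U s with hgdef
  show (2:ℝ) ^ (b - 3) * M₀' / omegaN n * s₀ ^ (2 - b) < ∫ s in (0:ℝ)..s₀, g s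
  -- basic facts about σ
  have hσnonneg : ∀ s : ℝ, 0 ≤ s → (0:ℝ) ≤ s ^ ((n:ℝ)⁻¹) := fun s hs => Real.rpow_nonneg hs _
  have hσmono : ∀ s t : ℝ, 0 ≤ s → s ≤ t → s ^ ((n:ℝ)⁻¹) ≤ t ^ ((n:ℝ)⁻¹) :=
    fun s t hs hst => Real.rpow_le_rpow hs hst (by positivity)
  have hσRn : (R ^ n : ℝ) ^ ((n:ℝ)⁻¹) = R := by
    rw [← Real.rpow_natCast R n, ← Real.rpow_mul hR.le,
      mul_inv_cancel₀ (by positivity : (n:ℝ) ≠ 0), Real.rpow_one]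
  have hσle : ∀ s ∈ Icc (0:ℝ) s₀, s ^ ((n:ℝ)⁻¹) ∈ Icc (0:ℝ) R := fun s hs =>
    ⟨hσnonneg s hs.1, (hσmono s (R ^ n) hs.1 (hs.2.trans hsR.le)).trans_eq hσRn⟩
  -- facts about h
  have hmaps : MapsTo (fun ρ : ℝ => ρ • e1 n) (Icc 0 R) (closure (Omega n R)) := by
    intro ρ hρ
    rw [hclo]
    exact Metric.mem_closedBall.2
      (by rw [dist_zero_right, norm_smul_e1 n hn ρ hρ.1]; exact hρ.2)
  have hcont : ContinuousOn h (Icc 0 R) := by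
    exact ((Real.continuous_rpow_const (by linarith : (0:ℝ) ≤ (n:ℝ) - 1)).continuousOn).mul
      (hu₀c.comp ((continuous_id.smul continuous_const).continuousOn) hmaps)
  have hInt : ∀ r ∈ Icc (0:ℝ) R, IntervalIntegrable h volume 0 r := fun r hr =>
    (hcont.mono (by rw [uIcc_of_le hr.1]; exact Icc_subset_Icc le_rfl hr.2)).intervalIntegrable
  have hInt2 : ∀ r₁ ∈ Icc (0:ℝ) R, ∀ r₂ ∈ Icc (0:ℝ) R, IntervalIntegrable h volume r₁ r₂ :=
    fun r₁ hr₁ r₂ hr₂ =>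
    (hcont.mono (by
      rw [← uIcc_of_le hR.le]
      exact uIcc_subset_uIcc (by rwa [uIcc_of_le hR.le]) (by rwa [uIcc_of_le hR.le]))).intervalIntegrable
  have hh0 : ∀ ρ ∈ Icc (0:ℝ) R, 0 ≤ h ρ := fun ρ hρ =>
    mul_nonneg (Real.rpow_nonneg hρ.1 _) (hu₀0 _ (hmaps hρ))
  -- facts about U
  have U0 : ∀ s ∈ Icc (0:ℝ) s₀, 0 ≤ U s := by
    intro s hs
    refine intervalIntegral.integral_nonneg (hσnonneg s hs.1) fun ρ hρ => ?_
    exact hh0 ρ ⟨hρ.1, hρ.2.trans (hσle s hs).2⟩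
  have Ucont : ContinuousOn U (Icc 0 s₀) := by
    have P : ContinuousOn (fun r => ∫ t in (0:ℝ)..r, h t) (Icc 0 R) := by
      have := intervalIntegral.continuousOn_primitive_interval'
        (hInt R ⟨hR.le, le_rfl⟩) (left_mem_uIcc (a := (0:ℝ)) (b := R))
      rwa [uIcc_of_le hR.le] at this
    exact P.comp ((Real.continuous_rpow_const (by positivity)).continuousOn) hσle
  -- lower bound for U on [s₀/4, s₀]
  have hω : 0 < omegaN n := by
    refine mul_pos hn0 (ENNReal.toReal_pos ?_ measure_ball_lt_top.ne)
    exact (Metric.measure_ball_pos volume 0 one_pos).ne'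
  have hq0 : (0:ℝ) ≤ s₀ / 4 := by linarith
  have hqR : s₀ / 4 ≤ R ^ n := by linarith
  have hpolar := polar n hn R hR u₀ hrad ((s₀/4) ^ ((n:ℝ)⁻¹))
    (hσnonneg _ hq0) ((hσmono _ (R ^ n) hq0 hqR).trans_eq hσRn)
  have hUq : M₀' / omegaN n ≤ U (s₀/4) := by
    rw [div_le_iff₀ hω, mul_comm]
    calc M₀' ≤ ∫ x in Metric.ball (0 : Euc n) ((s₀ / 4) ^ ((n:ℝ)⁻¹)), u₀ x := hint
      _ = omegaN n * U (s₀/4) := hpolar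
  have Ulow : ∀ s ∈ Icc (s₀/4) s₀, M₀' / omegaN n ≤ U s := by
    intro s hs
    have hsmem : s ∈ Icc (0:ℝ) s₀ := ⟨le_trans hq0 hs.1, hs.2⟩
    have hadd := intervalIntegral.integral_add_adjacent_intervals
      (μ := volume) (f := h) (a := 0) (b := (s₀/4) ^ ((n:ℝ)⁻¹)) (c := s ^ ((n:ℝ)⁻¹))
      (hInt _ (hσle (s₀/4) ⟨hq0, by linarith⟩))
      (hInt2 _ (hσle (s₀/4) ⟨hq0, by linarith⟩) _ (hσle s hsmem))
    have hnn : 0 ≤ ∫ ρ in ((s₀/4) ^ ((n:ℝ)⁻¹))..(s ^ ((n:ℝ)⁻¹)), h ρ := by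
      refine intervalIntegral.integral_nonneg (hσmono _ _ hq0 hs.1) fun ρ hρ => ?_
      exact hh0 ρ ⟨le_trans (hσnonneg _ hq0) hρ.1, hρ.2.trans (hσle s hsmem).2⟩
    calc M₀' / omegaN n ≤ U (s₀/4) := hUq
      _ ≤ U s := by rw [hU]; dsimp only; rw [← hadd]; linarith
  -- upper bound for U
  obtain ⟨z, hz, hMB'⟩ := (isCompact_closedBall (0 : Euc n) R).exists_isMaxOn
    ⟨0, by simp [hR.le]⟩ (by rwa [hclo] at hu₀c)
  have hMB : ∀ x ∈ Metric.closedBall (0 : Euc n) R, u₀ x ≤ u₀ z := fun x hx => hMB' hx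
  set MB := u₀ z with hMBdef
  have hMB0 : 0 ≤ MB := hu₀0 z (by rwa [hclo])
  have hUup : ∀ s ∈ Icc (0:ℝ) s₀, U s ≤ MB / n * s := by
    intro s hs
    have hσm := hσle s hs
    have h1 : U s ≤ ∫ ρ in (0:ℝ)..(s ^ ((n:ℝ)⁻¹)), MB * ρ ^ ((n:ℝ) - 1) := by
      refine intervalIntegral.integral_mono_on (hσnonneg s hs.1)
        (hInt _ hσm) (by
          apply ContinuousOn.intervalIntegrable
          apply continuousOn_const.mul
          exact (Real.continuous_rpow_const (by linarith)).continuousOn) ?_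
      intro ρ hρ
      have hρR : ρ ∈ Icc (0:ℝ) R := ⟨hρ.1, hρ.2.trans hσm.2⟩
      rw [hh]
      dsimp only
      rw [mul_comm MB _]
      exact mul_le_mul_of_nonneg_left (hMB _ (by
        have := hmaps hρR; rwa [hclo] at this)) (Real.rpow_nonneg hρ.1 _)
    have h2 : ∫ ρ in (0:ℝ)..(s ^ ((n:ℝ)⁻¹)), MB * ρ ^ ((n:ℝ) - 1) = MB / n * s := by
      rw [intervalIntegral.integral_const_mul, integral_rpow
        (Or.inl (by linarith : (-1:ℝ) < (n:ℝ) - 1))]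
      rw [sub_add_cancel, Real.zero_rpow (ne_of_gt hn0), ← Real.rpow_mul hs.1,
        inv_mul_cancel₀ (ne_of_gt hn0), Real.rpow_one]
      ring
    linarith
  -- nonnegativity of g
  have hg0 : ∀ s ∈ Icc (0:ℝ) s₀, 0 ≤ g s := by
    intro s hs
    exact mul_nonneg (mul_nonneg (Real.rpow_nonneg hs.1 _) (by linarith [hs.2])) (U0 s hs)
  -- integrability of g on [0, s₀]
  have hgcont : ContinuousOn g (Ioc 0 s₀) := by
    refine ContinuousOn.mul (ContinuousOn.mul ?_ (continuousOn_const.sub continuousOn_id)) ?_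
    · exact fun s hs =>
        (Real.continuousAt_rpow_const s (-b) (Or.inl hs.1.ne')).continuousWithinAt
    · exact Ucont.mono Ioc_subset_Icc_self
  have hgint : IntervalIntegrable g volume 0 s₀ := by
    rw [intervalIntegrable_iff_integrableOn_Ioc_of_le hs0.le]
    have hbd : IntegrableOn (fun s => MB / n * s₀ * s ^ (1 - b)) (Ioc 0 s₀) volume := by
      have := (intervalIntegral.intervalIntegrable_rpow'
        (by linarith : (-1:ℝ) < 1 - b) (a := 0) (b := s₀)).const_mul (MB / n * s₀)
      rwa [intervalIntegrable_iff_integrableOn_Ioc_of_le hs0.le] at this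
    refine hbd.mono' (hgcont.aestronglyMeasurable measurableSet_Ioc) ?_
    filter_upwards [ae_restrict_mem measurableSet_Ioc] with s hs
    have hsmem : s ∈ Icc (0:ℝ) s₀ := ⟨hs.1.le, hs.2⟩
    rw [Real.norm_eq_abs, abs_of_nonneg (hg0 s hsmem)]
    have e : MB / n * s₀ * s ^ (1 - b) = s ^ (-b) * s₀ * (MB / n * s) := by
      rw [show (1:ℝ) - b = -b + 1 by ring, Real.rpow_add hs.1, Real.rpow_one]
      ring
    rw [e, hgdef]
    dsimp only
    have hr0 : (0:ℝ) ≤ s ^ (-b) := Real.rpow_nonneg hs.1.le _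
    have hs1 : 0 < s := hs.1
    have hs2 : s ≤ s₀ := hs.2
    have hA := hUup s hsmem
    have hB := U0 s hsmem
    have h1 : s ^ (-b) * (s₀ - s) ≤ s ^ (-b) * s₀ :=
      mul_le_mul_of_nonneg_left (by linarith) hr0
    have h2 : s ^ (-b) * (s₀ - s) * U s ≤ s ^ (-b) * s₀ * U s :=
      mul_le_mul_of_nonneg_right h1 (by linarith)
    have h3 : s ^ (-b) * s₀ * U s ≤ s ^ (-b) * s₀ * (MB / n * s) :=
      mul_le_mul_of_nonneg_left (by linarith) (by positivity)
    linarith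
  -- splitting
  have i1 : IntervalIntegrable g volume 0 (s₀/4) :=
    hgint.mono_set (by apply uIcc_subset_uIcc <;> rw [uIcc_of_le hs0.le] <;>
      constructor <;> linarith)
  have i2 : IntervalIntegrable g volume (s₀/4) (s₀/2) :=
    hgint.mono_set (by apply uIcc_subset_uIcc <;> rw [uIcc_of_le hs0.le] <;>
      constructor <;> linarith)
  have i12 : IntervalIntegrable g volume 0 (s₀/2) :=
    hgint.mono_set (by apply uIcc_subset_uIcc <;> rw [uIcc_of_le hs0.le] <;>
      constructor <;> linarith)
  have i3 : IntervalIntegrable g volume (s₀/2) s₀ :=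
    hgint.mono_set (by apply uIcc_subset_uIcc <;> rw [uIcc_of_le hs0.le] <;>
      constructor <;> linarith)
  have hsplit : (∫ s in (0:ℝ)..s₀, g s)
      = (∫ s in (0:ℝ)..(s₀/4), g s) + (∫ s in (s₀/4)..(s₀/2), g s)
        + (∫ s in (s₀/2)..s₀, g s) := by
    rw [intervalIntegral.integral_add_adjacent_intervals i1 i2,
      intervalIntegral.integral_add_adjacent_intervals i12 i3]
  have hpos1 : 0 ≤ ∫ s in (0:ℝ)..(s₀/4), g s :=
    intervalIntegral.integral_nonneg (by linarith) fun s hs =>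
      hg0 s ⟨hs.1, by linarith [hs.2]⟩
  have hpos3 : 0 ≤ ∫ s in (s₀/2)..s₀, g s :=
    intervalIntegral.integral_nonneg (by linarith) fun s hs =>
      hg0 s ⟨by linarith [hs.1], hs.2⟩
  -- middle bound
  set c := M₀' / omegaN n with hc
  have hcpos : 0 < c := div_pos hM₀' hω
  have hφcont : ContinuousOn (fun s : ℝ => c * (s ^ (-b) * (s₀ - s))) (Icc (s₀/4) (s₀/2)) := by
    refine continuousOn_const.mul (ContinuousOn.mul ?_ (continuousOn_const.sub continuousOn_id))
    exact fun s hs => (Real.continuousAt_rpow_const s (-b)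
      (Or.inl (by have : 0 < s := lt_of_lt_of_le (by linarith) hs.1; exact this.ne'))).continuousWithinAt
  have hφint : IntervalIntegrable (fun s : ℝ => c * (s ^ (-b) * (s₀ - s))) volume (s₀/4) (s₀/2) :=
    (hφcont.mono (by rw [uIcc_of_le (by linarith)])).intervalIntegrable
  have hmid : (∫ s in (s₀/4)..(s₀/2), c * (s ^ (-b) * (s₀ - s)))
      ≤ ∫ s in (s₀/4)..(s₀/2), g s := by
    refine intervalIntegral.integral_mono_on (by linarith) hφint i2 fun s hs => ?_
    have hsm : s ∈ Icc (0:ℝ) s₀ := ⟨by linarith [hs.1], by linarith [hs.2]⟩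
    have hφ0 : 0 ≤ s ^ (-b) * (s₀ - s) :=
      mul_nonneg (Real.rpow_nonneg hsm.1 _) (by linarith [hsm.2])
    have := Ulow s ⟨hs.1, by linarith [hs.2]⟩
    calc c * (s ^ (-b) * (s₀ - s)) = s ^ (-b) * (s₀ - s) * c := by ring
      _ ≤ s ^ (-b) * (s₀ - s) * U s := mul_le_mul_of_nonneg_left this hφ0
      _ = g s := rfl
  -- strict bound on the constant part
  set K := (s₀/2) ^ ((1:ℝ) - b) with hK
  have hK2 : K = (s₀/2) ^ (-b) * (s₀/2) := by
    rw [hK, show (1:ℝ) - b = -b + 1 by ring, Real.rpow_add (by linarith), Real.rpow_one]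
  have hstrict : s₀/4 * (c * K) < ∫ s in (s₀/4)..(s₀/2), c * (s ^ (-b) * (s₀ - s)) := by
    have hq : 0 < ∫ s in (s₀/4)..(s₀/2), (c * (s ^ (-b) * (s₀ - s)) - c * K) := by
      refine intervalIntegral.intervalIntegral_pos_of_pos_on (hφint.sub (intervalIntegrable_const))
        (fun s hs => ?_) (by linarith)
      have hspos : 0 < s := by linarith [hs.1]
      have h1 : (s₀/2) ^ (-b) < s ^ (-b) :=
        Real.rpow_lt_rpow_of_neg hspos hs.2 (by linarith)
      have h2 : s₀/2 < s₀ - s := by linarith [hs.2]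
      have : K < s ^ (-b) * (s₀ - s) := by
        rw [hK2]
        exact mul_lt_mul'' h1 h2 (Real.rpow_nonneg (by linarith) _) (by linarith)
      have := mul_lt_mul_of_pos_left this hcpos
      linarith
    have hrw : (∫ s in (s₀/4)..(s₀/2), (c * (s ^ (-b) * (s₀ - s)) - c * K))
        = (∫ s in (s₀/4)..(s₀/2), c * (s ^ (-b) * (s₀ - s))) - s₀/4 * (c * K) := by
      rw [intervalIntegral.integral_sub hφint intervalIntegrable_const,
        intervalIntegral.integral_const, smul_eq_mul]
      congr 1
      ring
    linarith [hrw ▸ hq]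
  -- final equality of constants
  have heq : (2:ℝ) ^ (b - 3) * M₀' / omegaN n * s₀ ^ (2 - b) = s₀/4 * (c * K) := by
    have e1 : K = s₀ ^ ((1:ℝ) - b) * 2 ^ (b - 1) := by
      rw [hK, div_eq_mul_inv, Real.mul_rpow hs0.le (by norm_num),
        Real.inv_rpow (by norm_num), ← Real.rpow_neg (by norm_num),
        show -((1:ℝ) - b) = b - 1 by ring]
    have e2 : s₀ ^ ((2:ℝ) - b) = s₀ * s₀ ^ ((1:ℝ) - b) := by
      rw [show (2:ℝ) - b = 1 + (1 - b) by ring, Real.rpow_add hs0, Real.rpow_one]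
    have h4 : (2:ℝ) ^ (2:ℝ) = 4 := by
      rw [show (2:ℝ) ^ (2:ℝ) = (2:ℝ) ^ ((2:ℕ):ℝ) by norm_num, Real.rpow_natCast]
      norm_num
    have e3 : (2:ℝ) ^ (b - 1) = 4 * 2 ^ (b - 3) := by
      rw [show b - 1 = 2 + (b - 3) by ring, Real.rpow_add (by norm_num : (0:ℝ) < 2), h4]
    rw [e1, e2, e3, hc]
    ring
  calc (2:ℝ) ^ (b - 3) * M₀' / omegaN n * s₀ ^ (2 - b) = s₀/4 * (c * K) := heq
    _ < ∫ s in (s₀/4)..(s₀/2), c * (s ^ (-b) * (s₀ - s)) := hstrict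
    _ ≤ ∫ s in (s₀/4)..(s₀/2), g s := hmid
    _ ≤ ∫ s in (0:ℝ)..s₀, g s := by rw [hsplit]; linarith
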